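/- arXiv:2605.31333 — 2 statements merged into one kernel-verified Lean document; each statement's English description precedes it below -/
import Mathlib

section
/- Let (c_u)_{u∈ℤ} be the (n-periodic) quiddity of a triangulation of a convex n-gon, and for a sequence define M(a_1,…,a_k) = ∏_{t=1}^{k} [[a_t, −1],[1, 0]] as a product of 2×2 integer matrices. Then for any i, M(c_i, c_{i+1}, …, c_{i+n−1}) = −I, where I is the 2×2 identity matrix. -/
open Polynomial

open scoped Classical

namespace CCFPaper

/-- `a` and `b` are joined by an edge of the convex `n`-gon with vertices
`v_0, …, v_{n-1}` in cyclic order. -/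
def isEdge (n : ℕ) (a b : Fin n) : Prop :=
  b.val = a.val + 1 ∨ a.val = b.val + 1 ∨ (a.val = 0 ∧ b.val + 1 = n) ∨
    (b.val = 0 ∧ a.val + 1 = n)

/-- `p` represents a diagonal of the convex `n`-gon: its endpoints are listed in
increasing order and are not adjacent on the polygon. -/
def IsDiagPair (n : ℕ) (p : Fin n × Fin n) : Prop :=
  p.1.val + 2 ≤ p.2.val ∧ ¬(p.1.val = 0 ∧ p.2.val + 1 = n)

/-- Two diagonals (with endpoints listed in increasing order) cross in the interior of
the convex polygon. -/
def Crosses {n : ℕ} (p q : Fin n × Fin n) : Prop :=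
  (p.1.val < q.1.val ∧ q.1.val < p.2.val ∧ p.2.val < q.2.val) ∨
    (q.1.val < p.1.val ∧ p.1.val < q.2.val ∧ q.2.val < p.2.val)

/-- A triangulation of a convex `n`-gon: a maximal family (i.e. one of cardinality
`n - 3`) of pairwise non-crossing diagonals. -/
structure Triangulation (n : ℕ) where
  diag : Finset (Fin n × Fin n)
  diag_mem : ∀ p ∈ diag, IsDiagPair n p
  card_diag : diag.card = n - 3
  noncross : ∀ p ∈ diag, ∀ q ∈ diag, ¬ Crosses p q

/-- `a b` is a side of the triangulation: an edge of the polygon or a diagonal. -/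
def Triangulation.IsSide {n : ℕ} (T : Triangulation n) (a b : Fin n) : Prop :=
  isEdge n a b ∨ (a, b) ∈ T.diag ∨ (b, a) ∈ T.diag

/-- The cells (triangles) of a triangulation: triples of vertices, listed in increasing
order, that are pairwise joined by sides. -/
noncomputable def Triangulation.cells {n : ℕ} (T : Triangulation n) :
    Finset (Fin n × Fin n × Fin n) :=
  Finset.univ.filter fun t =>
    t.1.val < t.2.1.val ∧ t.2.1.val < t.2.2.val ∧
      T.IsSide t.1 t.2.1 ∧ T.IsSide t.2.1 t.2.2 ∧ T.IsSide t.1 t.2.2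

/-- The quiddity entry at a vertex: the number of cells incident to it. -/
noncomputable def Triangulation.quidFin {n : ℕ} (T : Triangulation n) (u : Fin n) : ℕ :=
  (T.cells.filter fun t => t.1 = u ∨ t.2.1 = u ∨ t.2.2 = u).card

/-- The vertex `v_u` for `u : ℤ`, via reduction mod `n`. -/
def vmap (n : ℕ) [NeZero n] (u : ℤ) : Fin n :=
  ⟨(u % (n : ℤ)).toNat, by
    have hn : (0 : ℤ) < (n : ℤ) := by
      exact_mod_cast Nat.pos_of_ne_zero (NeZero.ne n)
    have h1 : 0 ≤ u % (n : ℤ) := Int.emod_nonneg u (by omega)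
    have h2 : u % (n : ℤ) < (n : ℤ) := Int.emod_lt_of_pos u hn
    omega⟩

/-- The `n`-periodic quiddity sequence of a triangulation, indexed by `ℤ`. -/
noncomputable def Triangulation.quid {n : ℕ} [NeZero n] (T : Triangulation n) (u : ℤ) : ℕ :=
  T.quidFin (vmap n u)

/-- The `q`-integer `[a]_q = 1 + q + ⋯ + q^{a-1}` in `ℤ[q]`. -/
noncomputable def qInt (a : ℕ) : Polynomial ℤ :=
  ∑ t ∈ Finset.range a, X ^ t

/-- The `q`-deformed elementary matrix `M_q(a) = [[[a]_q, -q^{a-1}], [1, 0]]`. -/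
noncomputable def Mq (a : ℕ) : Matrix (Fin 2) (Fin 2) (Polynomial ℤ) :=
  !![qInt a, -(X ^ (a - 1)); 1, 0]

/-- The elementary matrix `M(a) = [[a, -1], [1, 0]]`. -/
def Mmat (a : ℤ) : Matrix (Fin 2) (Fin 2) ℤ := !![a, -1; 1, 0]

/-- The ordered product `M(c_i) M(c_{i+1}) ⋯ M(c_{i+k-1})`. -/
def MprodZ (c : ℤ → ℤ) (i : ℤ) (k : ℕ) : Matrix (Fin 2) (Fin 2) ℤ :=
  ((List.range k).map fun t => Mmat (c (i + t))).prod

/-- The ordered product `M_q(c_i) M_q(c_{i+1}) ⋯ M_q(c_{i+k-1})`. -/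
noncomputable def MqProd (c : ℤ → ℕ) (i : ℤ) (k : ℕ) :
    Matrix (Fin 2) (Fin 2) (Polynomial ℤ) :=
  ((List.range k).map fun t => Mq (c (i + t))).prod

/-- The `q`-deformed Conway–Coxeter frieze entries `ζ_{k, k+m}`, defined by
`ζ_{k,k} = 0`, `ζ_{k,k+1} = 1` and the recurrence
`ζ_{k,ℓ+1} = [c_ℓ]_q ζ_{k,ℓ} - q^{c_{ℓ-1}-1} ζ_{k,ℓ-1}`. -/
noncomputable def zetaNat (c : ℤ → ℕ) (k : ℤ) : ℕ → Polynomial ℤ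
  | 0 => 0
  | 1 => 1
  | m + 2 =>
      qInt (c (k + m + 1)) * zetaNat c k (m + 1) - X ^ (c (k + m) - 1) * zetaNat c k m

/-- The `q`-CCF entry `ζ_{k,ℓ}` (junk value `0` for `ℓ < k`). -/
noncomputable def zetaI (c : ℤ → ℕ) (k l : ℤ) : Polynomial ℤ :=
  zetaNat c k (l - k).toNat

/-- The classical Conway–Coxeter frieze entries `σ_{k, k+m}`, with `σ_{k,k} = 0`,
`σ_{k,k+1} = 1`, and `σ_{k,ℓ+1} = c_ℓ σ_{k,ℓ} - σ_{k,ℓ-1}`. -/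
def sigmaNat (c : ℤ → ℕ) (k : ℤ) : ℕ → ℤ
  | 0 => 0
  | 1 => 1
  | m + 2 => (c (k + m + 1) : ℤ) * sigmaNat c k (m + 1) - sigmaNat c k m

/-- The CCF entry `σ_{k,ℓ}` (junk value `0` for `ℓ < k`). -/
def sigmaI (c : ℤ → ℕ) (k l : ℤ) : ℤ :=
  sigmaNat c k (l - k).toNat

/-- `ν^tri_{k,m}`: the number of pairs `(a, b)` with `k ≤ a`, `a + 2 ≤ b ≤ m`, and
`σ_{a,b} = 1`. -/
noncomputable def nuTri (c : ℤ → ℕ) (k m : ℤ) : ℕ :=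
  (((Finset.range (m - k + 1).toNat) ×ˢ (Finset.range (m - k + 1).toNat)).filter fun st =>
    st.1 + 2 ≤ st.2 ∧ sigmaI c (k + st.1) (k + st.2) = 1).card

/-- `ν^rec_{i,j,m}`: the number of pairs `(a, b)` with `i ≤ a ≤ j`, `j + 2 ≤ b ≤ m`, and
`σ_{a,b} = 1`. -/
noncomputable def nuRec (c : ℤ → ℕ) (i j m : ℤ) : ℕ :=
  (((Finset.range (j - i + 1).toNat) ×ˢ (Finset.range (m - j - 1).toNat)).filter fun st =>
    sigmaI c (i + st.1) (j + 2 + st.2) = 1).card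

/-- The image of an integer polynomial in the field `ℚ(q)` of rational functions. -/
noncomputable def ratq (p : Polynomial ℤ) : RatFunc ℚ :=
  algebraMap (Polynomial ℚ) (RatFunc ℚ) (p.map (Int.castRingHom ℚ))

/-- The `q`-deformed continued fraction `[[c_i, …, c_{i+m}]]_q`, computed in `ℚ(q)`:
`cfq c m i = [c_i]_q - q^{c_i - 1} / cfq c (m-1) (i+1)`. -/
noncomputable def cfq (c : ℤ → ℕ) : ℕ → ℤ → RatFunc ℚ
  | 0, i => ratq (qInt (c i))
  | m + 1, i => ratq (qInt (c i)) - ratq (X ^ (c i - 1)) / cfq c m (i + 1)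

lemma MprodZ_eq (c : ℤ → ℤ) (i : ℤ) (k : ℕ) :
    MprodZ c i k = ((List.range k).map fun t : ℕ => Mmat (c (i + (t:ℤ)))).prod := by
  unfold MprodZ
  simp only [List.pure_def, List.bind_eq_flatMap, ← List.map_eq_flatMap, List.map_map]
  rfl

lemma Mmat_one_cube : Mmat 1 * Mmat 1 * Mmat 1 = -1 := by
  rw [Mmat, Matrix.mul_fin_two, Matrix.mul_fin_two]
  norm_num
  ext i j
  fin_cases i <;> fin_cases j <;> simp

lemma Mmat_splice (a b : ℤ) : Mmat a * Mmat 1 * Mmat b = Mmat (a-1) * Mmat (b-1) := by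
  rw [Mmat, Mmat, Mmat, Mmat, Mmat, Matrix.mul_fin_two, Matrix.mul_fin_two, Matrix.mul_fin_two]
  congr 1 <;> ring

lemma Mmat_isUnit (a : ℤ) : IsUnit (Mmat a) := by
  rw [Matrix.isUnit_iff_isUnit_det]
  simp [Mmat, Matrix.det_fin_two]

lemma MprodZ_add (c : ℤ → ℤ) (i : ℤ) (k l : ℕ) :
    MprodZ c i (k + l) = MprodZ c i k * MprodZ c (i + k) l := by
  rw [MprodZ_eq, MprodZ_eq, MprodZ_eq]
  rw [List.range_add, List.map_append, List.prod_append]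
  congr 1
  rw [List.map_map]
  congr 1
  apply List.map_congr_left
  intro t _
  simp only [Function.comp_apply]
  congr 2
  push_cast
  ring

lemma MprodZ_one (c : ℤ → ℤ) (i : ℤ) : MprodZ c i 1 = Mmat (c i) := by
  rw [MprodZ_eq, show List.range 1 = [0] from rfl]
  simp

lemma MprodZ_congr (c c' : ℤ → ℤ) (i j : ℤ) (k : ℕ)
    (h : ∀ t : ℕ, t < k → c (i + t) = c' (j + t)) :
    MprodZ c i k = MprodZ c' j k := by
  rw [MprodZ_eq, MprodZ_eq]
  congr 1
  apply List.map_congr_left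
  intro t ht
  rw [List.mem_range] at ht
  rw [h t ht]

lemma MprodZ_all (c : ℤ → ℤ) (n : ℕ) (hper : ∀ u : ℤ, c (u + n) = c u)
    (h0 : MprodZ c 0 n = -1) : ∀ i : ℤ, MprodZ c i n = -1 := by
  have key : ∀ i : ℤ, Mmat (c i) * MprodZ c (i+1) n = MprodZ c i n * Mmat (c i) := by
    intro i
    have h1 : MprodZ c i (1 + n) = Mmat (c i) * MprodZ c (i+1) n := by
      rw [MprodZ_add, MprodZ_one]
      norm_num
    have h2 : MprodZ c i (n + 1) = MprodZ c i n * Mmat (c i) := by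
      rw [MprodZ_add, MprodZ_one, hper]
    rw [← h1, ← h2, Nat.add_comm]
  have step : ∀ i : ℤ, MprodZ c i n = -1 ↔ MprodZ c (i+1) n = -1 := by
    intro i
    constructor
    · intro h
      have hk := key i
      rw [h] at hk
      have : Mmat (c i) * MprodZ c (i+1) n = Mmat (c i) * (-1) := by
        rw [hk]; simp
      exact (Mmat_isUnit (c i)).mul_left_cancel this
    · intro h
      have hk := key i
      rw [h] at hk
      have : MprodZ c i n * Mmat (c i) = (-1) * Mmat (c i) := by
        rw [← hk]; simp
      exact (Mmat_isUnit (c i)).mul_right_cancel this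
  intro i
  induction i using Int.induction_on with
  | zero => exact h0
  | succ k hk => exact (step k).1 hk
  | pred k hk => exact (step (-k-1)).2 (by rw [show (-k-1+1 : ℤ) = -k by ring]; exact hk)

theorem diag_card_bound : ∀ n : ℕ, ∀ D : Finset (Fin n × Fin n),
    (∀ p ∈ D, IsDiagPair n p) → (∀ p ∈ D, ∀ q ∈ D, ¬ Crosses p q) →
    D.card ≤ n - 3 := by
  intro n
  induction n using Nat.strong_induction_on with
  | _ n IH =>
  intro D hmem hcross
  rcases D.eq_empty_or_nonempty with rfl | ⟨p0, hp0⟩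
  · simp
  set A := p0.1.val with hA
  set B := p0.2.val with hB
  obtain ⟨hgap, hwrap⟩ := hmem p0 hp0
  have hBn : B < n := p0.2.isLt
  have hn4 : 4 ≤ n := by omega
  set m1 := B - A + 1 with hm1
  set m2 := n - B + A + 1 with hm2
  have hm1n : m1 < n := by omega
  have hm2n : m2 < n := by omega
  have hm1_3 : 3 ≤ m1 := by omega
  have hm2_3 : 3 ≤ m2 := by omega
  -- the partition
  set P : Fin n × Fin n → Prop := fun p => A ≤ p.1.val ∧ p.2.val ≤ B with hP
  classical
  set F := D.filter (fun p => P p) with hF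
  set D2 := D.filter (fun p => ¬ P p) with hD2
  set D1 := F.erase p0 with hD1
  have hp0F : p0 ∈ F := by
    rw [hF, Finset.mem_filter]
    exact ⟨hp0, le_refl _, le_refl _⟩
  have hcardD : D.card = D1.card + 1 + D2.card := by
    have h1 : F.card = D1.card + 1 := by
      rw [hD1, Finset.card_erase_of_mem hp0F]
      have : 1 ≤ F.card := Finset.card_pos.mpr ⟨p0, hp0F⟩
      omega
    have h2 : F.card + D2.card = D.card := by
      rw [hF, hD2]
      exact Finset.card_filter_add_card_filter_not _
    omega
  -- facts about members of D1
  have hD1mem : ∀ p ∈ D1, p ∈ D ∧ A ≤ p.1.val ∧ p.1.val + 2 ≤ p.2.val ∧ p.2.val ≤ B ∧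
      ¬(p.1.val = A ∧ p.2.val = B) := by
    intro p hp
    rw [hD1, Finset.mem_erase, hF, Finset.mem_filter] at hp
    obtain ⟨hne, hpD, hPA, hPB⟩ := hp
    refine ⟨hpD, hPA, (hmem p hpD).1, hPB, ?_⟩
    rintro ⟨h1, h2⟩
    exact hne (Prod.ext (Fin.ext h1) (Fin.ext h2))
  -- facts about members of D2
  have hD2mem : ∀ p ∈ D2, p ∈ D ∧ p.1.val + 2 ≤ p.2.val ∧
      (p.1.val ≤ A ∨ B ≤ p.1.val) ∧ (p.2.val ≤ A ∨ B ≤ p.2.val) ∧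
      ¬(p.1.val = 0 ∧ p.2.val + 1 = n) ∧ ¬(A ≤ p.1.val ∧ p.2.val ≤ B) := by
    intro p hp
    rw [hD2, Finset.mem_filter] at hp
    obtain ⟨hpD, hnP⟩ := hp
    obtain ⟨hg, hw⟩ := hmem p hpD
    have hc1 := hcross p hpD p0 hp0
    rw [Crosses] at hc1
    simp only [hP] at hnP
    push_neg at hnP
    refine ⟨hpD, hg, ?_, ?_, hw, ?_⟩ <;> omega
  -- map for D1
  have hm1pos : 0 < m1 := by omega
  set g1 : Fin n × Fin n → Fin m1 × Fin m1 := fun p =>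
    (⟨min (p.1.val - A) (m1 - 1), by omega⟩, ⟨min (p.2.val - A) (m1 - 1), by omega⟩) with hg1
  have hg1val : ∀ p ∈ D1, (g1 p).1.val = p.1.val - A ∧ (g1 p).2.val = p.2.val - A := by
    intro p hp
    obtain ⟨_, h1, h2, h3, _⟩ := hD1mem p hp
    constructor <;> simp [hg1] <;> omega
  set D1' := D1.image g1 with hD1'
  have hcard1 : D1'.card = D1.card := by
    rw [hD1']
    apply Finset.card_image_of_injOn
    intro p hp q hq hpq
    obtain ⟨hp1, hp2⟩ := hg1val p hp
    obtain ⟨hq1, hq2⟩ := hg1val q hq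
    obtain ⟨_, ha1, _, _, _⟩ := hD1mem p hp
    obtain ⟨_, hb1, _, _, _⟩ := hD1mem q hq
    have e1 : (g1 p).1.val = (g1 q).1.val := by rw [hpq]
    have e2 : (g1 p).2.val = (g1 q).2.val := by rw [hpq]
    rw [hp1, hq1] at e1
    rw [hp2, hq2] at e2
    exact Prod.ext (Fin.ext (by omega)) (Fin.ext (by omega))
  have hbound1 : D1'.card ≤ m1 - 3 := by
    apply IH m1 hm1n
    · intro q hq
      rw [hD1', Finset.mem_image] at hq
      obtain ⟨p, hp, rfl⟩ := hq
      obtain ⟨hp1, hp2⟩ := hg1val p hp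
      obtain ⟨_, h1, h2, h3, h4⟩ := hD1mem p hp
      constructor
      · rw [hp1, hp2]; omega
      · rw [hp1, hp2]; omega
    · intro q hq r hr
      rw [hD1', Finset.mem_image] at hq hr
      obtain ⟨p, hp, rfl⟩ := hq
      obtain ⟨s, hs, rfl⟩ := hr
      obtain ⟨hp1, hp2⟩ := hg1val p hp
      obtain ⟨hs1, hs2⟩ := hg1val s hs
      obtain ⟨hpD, ha1, ha2, ha3, _⟩ := hD1mem p hp
      obtain ⟨hsD, hb1, hb2, hb3, _⟩ := hD1mem s hs
      intro hc
      apply hcross p hpD s hsD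
      rw [Crosses] at hc ⊢
      rw [hp1, hp2, hs1, hs2] at hc
      omega
  -- map for D2
  set f2 : ℕ → ℕ := fun x => if x ≤ A then x else x - (B - A - 1) with hf2
  have hf2lt : ∀ x, x < n → f2 x < m2 := by
    intro x hx
    simp only [hf2]
    split_ifs <;> omega
  set g2 : Fin n × Fin n → Fin m2 × Fin m2 := fun p =>
    (⟨f2 p.1.val, hf2lt _ p.1.isLt⟩, ⟨f2 p.2.val, hf2lt _ p.2.isLt⟩) with hg2
  set D2' := D2.image g2 with hD2'
  have hf2mono : ∀ x y, (x ≤ A ∨ B ≤ x) → (y ≤ A ∨ B ≤ y) → (f2 x < f2 y ↔ x < y) := by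
    intro x y hx hy
    simp only [hf2]
    split_ifs <;> omega
  have hcard2 : D2'.card = D2.card := by
    rw [hD2']
    apply Finset.card_image_of_injOn
    intro p hp q hq hpq
    obtain ⟨_, _, hp1, hp2, _, _⟩ := hD2mem p hp
    obtain ⟨_, _, hq1, hq2, _, _⟩ := hD2mem q hq
    have e1 : f2 p.1.val = f2 q.1.val := congrArg (fun z => z.1.val) hpq
    have e2 : f2 p.2.val = f2 q.2.val := congrArg (fun z => z.2.val) hpq
    have i1 := hf2mono p.1.val q.1.val hp1 hq1
    have i1' := hf2mono q.1.val p.1.val hq1 hp1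
    have i2 := hf2mono p.2.val q.2.val hp2 hq2
    have i2' := hf2mono q.2.val p.2.val hq2 hp2
    exact Prod.ext (Fin.ext (by omega)) (Fin.ext (by omega))
  have hbound2 : D2'.card ≤ m2 - 3 := by
    apply IH m2 hm2n
    · intro q hq
      rw [hD2', Finset.mem_image] at hq
      obtain ⟨p, hp, rfl⟩ := hq
      obtain ⟨_, hg, hp1, hp2, hw, hnP⟩ := hD2mem p hp
      have : (g2 p).1.val = f2 p.1.val := rfl
      have : (g2 p).2.val = f2 p.2.val := rfl
      constructor
      · show f2 p.1.val + 2 ≤ f2 p.2.val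
        simp only [hf2]
        split_ifs <;> omega
      · show ¬(f2 p.1.val = 0 ∧ f2 p.2.val + 1 = m2)
        simp only [hf2]
        split_ifs <;> omega
    · intro q hq r hr
      rw [hD2', Finset.mem_image] at hq hr
      obtain ⟨p, hp, rfl⟩ := hq
      obtain ⟨s, hs, rfl⟩ := hr
      obtain ⟨hpD, hga, hp1, hp2, _, _⟩ := hD2mem p hp
      obtain ⟨hsD, hgb, hs1, hs2, _, _⟩ := hD2mem s hs
      intro hc
      apply hcross p hpD s hsD
      rw [Crosses] at hc ⊢
      have i1 := hf2mono p.1.val s.1.val hp1 hs1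
      have i2 := hf2mono s.1.val p.1.val hs1 hp1
      have i3 := hf2mono s.1.val p.2.val hs1 hp2
      have i4 := hf2mono p.1.val s.2.val hp1 hs2
      have i5 := hf2mono p.2.val s.2.val hp2 hs2
      have i6 := hf2mono s.2.val p.2.val hs2 hp2
      simp only [hg2] at hc
      omega
  omega

lemma exists_ear (n : ℕ) (hn : 4 ≤ n) (T : Triangulation n) :
    ∃ u : ℕ, 1 ≤ u ∧ u ≤ n - 2 ∧
      (∃ e ∈ T.diag, e.1.val + 1 = u ∧ e.2.val = u + 1) ∧
      ∀ p ∈ T.diag, p.1.val ≠ u ∧ p.2.val ≠ u := by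
  have hne : T.diag.Nonempty := by
    rw [← Finset.card_pos, T.card_diag]
    omega
  obtain ⟨q, hq, hmin⟩ := T.diag.exists_min_image (fun p => p.2.val - p.1.val) hne
  obtain ⟨hgap, hwrap⟩ := T.diag_mem q hq
  set A := q.1.val with hA
  set B := q.2.val with hB
  have hBn : B < n := q.2.isLt
  by_cases h2 : B = A + 2
  · -- ear at A+1
    refine ⟨A + 1, by omega, by omega, ?_, ?_⟩
    · exact ⟨q, hq, by omega, by omega⟩
    · intro p hp
      obtain ⟨hpg, _⟩ := T.diag_mem p hp
      constructor
      · intro h1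
        exact T.noncross q hq p hp (Or.inl (by omega))
      · intro h1
        exact T.noncross p hp q hq (Or.inl (by omega))
  · -- minimal gap ≥ 3 : contradiction
    exfalso
    have hg3 : A + 3 ≤ B := by omega
    -- A+1 is free
    have hfree : ∀ p ∈ T.diag, p.1.val ≠ A + 1 ∧ p.2.val ≠ A + 1 := by
      intro p hp
      obtain ⟨hpg, _⟩ := T.diag_mem p hp
      have hm := hmin p hp
      constructor
      · intro h1
        -- p = (A+1, y), minimality forces y ≥ B+1, then q crosses p
        have hy : B + 1 ≤ p.2.val := by omega
        exact T.noncross q hq p hp (Or.inl (by omega))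
      · intro h1
        -- p = (x, A+1) with x ≤ A-1, crosses q
        exact T.noncross p hp q hq (Or.inl (by omega))
    have hA2n : A + 2 < n := by omega
    set earq : Fin n × Fin n := ((⟨A, by omega⟩ : Fin n), (⟨A + 2, by omega⟩ : Fin n))
      with hearq
    have hearnot : earq ∉ T.diag := by
      intro h
      have := hmin earq h
      simp [hearq] at this
      omega
    set Dp := insert earq T.diag with hDp
    have hcardp : Dp.card = n - 2 := by
      rw [hDp, Finset.card_insert_of_notMem hearnot, T.card_diag]
      omega
    have hbound := diag_card_bound n Dp ?_ ?_
    · omega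
    · intro p hp
      rw [hDp, Finset.mem_insert] at hp
      rcases hp with rfl | hp
      · constructor
        · show A + 2 ≤ A + 2
          omega
        · show ¬(A = 0 ∧ A + 2 + 1 = n)
          omega
      · exact T.diag_mem p hp
    · intro p hp r hr
      rw [hDp, Finset.mem_insert] at hp hr
      rcases hp with rfl | hp <;> rcases hr with rfl | hr
      · rw [Crosses]; simp [hearq]
      · obtain ⟨h1, h2⟩ := hfree r hr
        rw [Crosses]
        simp only [hearq]
        simp
        omega
      · obtain ⟨h1, h2⟩ := hfree p hp
        rw [Crosses]
        simp only [hearq]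
        simp
        omega
      · exact T.noncross p hp r hr

lemma mem_cells_iff {n : ℕ} (T : Triangulation n) (t : Fin n × Fin n × Fin n) :
    t ∈ T.cells ↔ t.1.val < t.2.1.val ∧ t.2.1.val < t.2.2.val ∧
      T.IsSide t.1 t.2.1 ∧ T.IsSide t.2.1 t.2.2 ∧ T.IsSide t.1 t.2.2 := by
  rw [Triangulation.cells, Finset.mem_filter]
  simp


/-- deletion relabeling -/
def delF (u x : ℕ) : ℕ := if x < u then x else x - 1
/-- lifting relabeling -/
def liftF (u w : ℕ) : ℕ := if w < u then w else w + 1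

lemma delF_spec (u x : ℕ) (hx : x ≠ u) :
    (x < u ∧ delF u x = x) ∨ (u < x ∧ delF u x = x - 1) := by
  unfold delF
  split_ifs <;> omega

lemma liftF_spec (u w : ℕ) : (w < u ∧ liftF u w = w) ∨ (u ≤ w ∧ liftF u w = w + 1) := by
  unfold liftF
  split_ifs <;> omega

lemma delF_lift (u w : ℕ) : delF u (liftF u w) = w := by
  unfold delF liftF
  split_ifs <;> omega

lemma lift_delF (u x : ℕ) (hx : x ≠ u) : liftF u (delF u x) = x := by
  unfold delF liftF
  split_ifs <;> omega

lemma liftF_ne (u w : ℕ) : liftF u w ≠ u := by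
  unfold liftF
  split_ifs <;> omega

lemma delF_mono (u x y : ℕ) (hx : x ≠ u) (hy : y ≠ u) :
    x < y ↔ delF u x < delF u y := by
  unfold delF
  split_ifs <;> omega

lemma delF_inj (u x y : ℕ) (hx : x ≠ u) (hy : y ≠ u) (h : delF u x = delF u y) :
    x = y := by
  have := delF_mono u x y hx hy
  have := delF_mono u y x hy hx
  omega

lemma ear_removal (n : ℕ) (hn : 4 ≤ n) (T : Triangulation n) :
    ∃ (u : ℕ) (T' : Triangulation (n-1)), 1 ≤ u ∧ u ≤ n - 2 ∧
      (∀ v : Fin n, v.val = u → T.quidFin v = 1) ∧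
      (∀ (v : Fin n) (w : Fin (n-1)), v.val < u → w.val = v.val →
        T.quidFin v = T'.quidFin w + (if v.val + 1 = u then 1 else 0)) ∧
      (∀ (v : Fin n) (w : Fin (n-1)), u < v.val → w.val + 1 = v.val →
        T.quidFin v = T'.quidFin w + (if v.val = u + 1 then 1 else 0)) := by
  obtain ⟨u, hu1, hu2, ⟨e, he, he1, he2⟩, hfree⟩ := exists_ear n hn T
  -- the deletion map and its inverse
  have hf3spec : ∀ x : ℕ, x ≠ u → (x < u ∧ delF u x = x) ∨ (u < x ∧ delF u x = x - 1) :=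
    delF_spec u
  have hf3lt : ∀ x, x < n → delF u x < n - 1 := by
    intro x hx
    unfold delF
    split_ifs <;> omega
  have hglt : ∀ w, w < n - 1 → liftF u w < n := by
    intro w hw
    rcases liftF_spec u w with ⟨h, h'⟩ | ⟨h, h'⟩ <;> omega
  have hmono := delF_mono u
  have hinj := delF_inj u
  set f3 : Fin n → Fin (n-1) := fun x => ⟨delF u x.val, hf3lt _ x.isLt⟩ with hf3
  set g : Fin (n-1) → Fin n := fun w => ⟨liftF u w.val, hglt _ w.isLt⟩ with hg
  -- members of the erased set
  have hEm : ∀ p ∈ T.diag.erase e, p ∈ T.diag ∧ p.1.val ≠ u ∧ p.2.val ≠ u ∧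
      p.1.val + 2 ≤ p.2.val ∧ ¬(p.1.val = 0 ∧ p.2.val + 1 = n) ∧
      ¬(p.1.val + 1 = u ∧ p.2.val = u + 1) := by
    intro p hp
    rw [Finset.mem_erase] at hp
    obtain ⟨hne, hpD⟩ := hp
    obtain ⟨h1, h2⟩ := hfree p hpD
    obtain ⟨h3, h4⟩ := T.diag_mem p hpD
    refine ⟨hpD, h1, h2, h3, h4, ?_⟩
    rintro ⟨k1, k2⟩
    apply hne
    refine Prod.ext (Fin.ext ?_) (Fin.ext ?_) <;> omega
  set diag' : Finset (Fin (n-1) × Fin (n-1)) :=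
    (T.diag.erase e).image (fun p => (f3 p.1, f3 p.2)) with hdiag'
  have hdiag'mem : ∀ q ∈ diag', ∃ p ∈ T.diag.erase e, f3 p.1 = q.1 ∧ f3 p.2 = q.2 := by
    intro q hq
    rw [hdiag', Finset.mem_image] at hq
    obtain ⟨p, hp, rfl⟩ := hq
    exact ⟨p, hp, rfl, rfl⟩
  have hT'1 : ∀ q ∈ diag', IsDiagPair (n-1) q := by
    intro q hq
    obtain ⟨p, hp, e1, e2⟩ := hdiag'mem q hq
    obtain ⟨_, h1, h2, h3, h4, h5⟩ := hEm p hp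
    have v1 : q.1.val = delF u p.1.val := by rw [← e1]
    have v2 : q.2.val = delF u p.2.val := by rw [← e2]
    have hp2n : p.2.val < n := p.2.isLt
    constructor
    · rw [v1, v2]
      rcases hf3spec _ h1 with ⟨k, k'⟩ | ⟨k, k'⟩ <;>
        rcases hf3spec _ h2 with ⟨l, l'⟩ | ⟨l, l'⟩ <;> rw [k', l'] <;> omega
    · rw [v1, v2]
      rcases hf3spec _ h1 with ⟨k, k'⟩ | ⟨k, k'⟩ <;>
        rcases hf3spec _ h2 with ⟨l, l'⟩ | ⟨l, l'⟩ <;> rw [k', l'] <;> omega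
  have hT'2 : diag'.card = (n-1) - 3 := by
    rw [hdiag', Finset.card_image_of_injOn, Finset.card_erase_of_mem he, T.card_diag]
    · omega
    · intro p hp q hq hpq
      obtain ⟨_, h1, h2, _, _, _⟩ := hEm p hp
      obtain ⟨_, k1, k2, _, _, _⟩ := hEm q hq
      have e1 : delF u p.1.val = delF u q.1.val := congrArg (fun z => z.1.val) hpq
      have e2 : delF u p.2.val = delF u q.2.val := congrArg (fun z => z.2.val) hpq
      exact Prod.ext (Fin.ext (hinj _ _ h1 k1 e1)) (Fin.ext (hinj _ _ h2 k2 e2))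
  have hT'3 : ∀ p ∈ diag', ∀ q ∈ diag', ¬ Crosses p q := by
    intro p hp q hq hc
    obtain ⟨p', hp', e1, e2⟩ := hdiag'mem p hp
    obtain ⟨q', hq', e3, e4⟩ := hdiag'mem q hq
    obtain ⟨hp'D, h1, h2, _, _, _⟩ := hEm p' hp'
    obtain ⟨hq'D, k1, k2, _, _, _⟩ := hEm q' hq'
    apply T.noncross p' hp'D q' hq'D
    rw [Crosses] at hc ⊢
    have v1 : p.1.val = delF u p'.1.val := by rw [← e1]
    have v2 : p.2.val = delF u p'.2.val := by rw [← e2]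
    have v3 : q.1.val = delF u q'.1.val := by rw [← e3]
    have v4 : q.2.val = delF u q'.2.val := by rw [← e4]
    rw [v1, v2, v3, v4] at hc
    rcases hc with ⟨c1, c2, c3⟩ | ⟨c1, c2, c3⟩
    · exact Or.inl ⟨(hmono _ _ h1 k1).mpr c1, (hmono _ _ k1 h2).mpr c2,
        (hmono _ _ h2 k2).mpr c3⟩
    · exact Or.inr ⟨(hmono _ _ k1 h1).mpr c1, (hmono _ _ h1 k2).mpr c2,
        (hmono _ _ k2 h2).mpr c3⟩
  set T' : Triangulation (n-1) := ⟨diag', hT'1, hT'2, hT'3⟩ with hT'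
  have hT'diag : T'.diag = diag' := rfl
  have hliftmono : ∀ a b : ℕ, a < b → liftF u a < liftF u b := by
    intro a b hab
    unfold liftF
    split_ifs <;> omega
  have hfg : ∀ w : Fin (n-1), f3 (g w) = w := by
    intro w
    apply Fin.ext
    show delF u (liftF u w.val) = w.val
    exact delF_lift u w.val
  -- vertices joined to u are u-1 and u+1
  have hside_u : ∀ x y : Fin n, T.IsSide x y →
      (x.val = u → (y.val + 1 = u ∨ y.val = u + 1)) ∧
      (y.val = u → (x.val + 1 = u ∨ x.val = u + 1)) := by
    intro x y hs
    rcases hs with h | h | h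
    · rw [isEdge] at h
      constructor <;> intro hx <;> omega
    · obtain ⟨a1, a2⟩ := hfree _ h
      have a1' : x.val ≠ u := a1
      have a2' : y.val ≠ u := a2
      constructor <;> intro hx <;> omega
    · obtain ⟨a1, a2⟩ := hfree _ h
      have a1' : y.val ≠ u := a1
      have a2' : x.val ≠ u := a2
      constructor <;> intro hx <;> omega
  -- side transport
  have hside : ∀ x y : Fin n, x.val ≠ u → y.val ≠ u → x.val < y.val →
      (T.IsSide x y ↔ T'.IsSide (f3 x) (f3 y)) := by
    intro x y hx hy hxy
    have vx : (f3 x).val = delF u x.val := rfl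
    have vy : (f3 y).val = delF u y.val := rfl
    have hxn : x.val < n := x.isLt
    have hyn : y.val < n := y.isLt
    constructor
    · intro hs
      rcases hs with h | h | h
      · apply Or.inl
        rw [isEdge] at h ⊢
        rw [vx, vy]
        rcases hf3spec x.val hx with ⟨a, a'⟩ | ⟨a, a'⟩ <;>
          rcases hf3spec y.val hy with ⟨b, b'⟩ | ⟨b, b'⟩ <;> rw [a', b'] <;> omega
      · by_cases hxe : (x, y) = e
        · apply Or.inl
          have hx1 : x.val + 1 = u := by
            have := congrArg (fun z : Fin n × Fin n => z.1.val) hxe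
            simp at this
            omega
          have hy1 : y.val = u + 1 := by
            have := congrArg (fun z : Fin n × Fin n => z.2.val) hxe
            simp at this
            omega
          rw [isEdge, vx, vy]
          rcases hf3spec x.val hx with ⟨a, a'⟩ | ⟨a, a'⟩ <;>
            rcases hf3spec y.val hy with ⟨b, b'⟩ | ⟨b, b'⟩ <;> rw [a', b'] <;> omega
        · refine Or.inr (Or.inl ?_)
          show (f3 x, f3 y) ∈ diag'
          rw [hdiag', Finset.mem_image]
          exact ⟨(x, y), Finset.mem_erase.mpr ⟨hxe, h⟩, rfl⟩
      · have hyx : y.val + 2 ≤ x.val := (T.diag_mem _ h).1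
        omega
    · intro hs
      rcases hs with h | h | h
      · rw [isEdge, vx, vy] at h
        rcases hf3spec x.val hx with ⟨a, a'⟩ | ⟨a, a'⟩ <;>
          rcases hf3spec y.val hy with ⟨b, b'⟩ | ⟨b, b'⟩ <;> rw [a', b'] at h
        all_goals {
          by_cases hc1 : y.val = x.val + 1
          · exact Or.inl (Or.inl hc1)
          · by_cases hc2 : x.val = 0 ∧ y.val + 1 = n
            · exact Or.inl (Or.inr (Or.inr (Or.inl hc2)))
            · have hear : x.val + 1 = u ∧ y.val = u + 1 := by omega
              have hxy' : (x, y) = e := by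
                refine Prod.ext (Fin.ext (show x.val = e.1.val by omega))
                  (Fin.ext (show y.val = e.2.val by omega))
              exact Or.inr (Or.inl (by rw [hxy']; exact he)) }
      · obtain ⟨p, hp, e1, e2⟩ := hdiag'mem _ h
        obtain ⟨hpD, k1, k2, _, _, _⟩ := hEm p hp
        have e1' : delF u p.1.val = delF u x.val := congrArg Fin.val e1
        have e2' : delF u p.2.val = delF u y.val := congrArg Fin.val e2
        have : p = (x, y) :=
          Prod.ext (Fin.ext (hinj _ _ k1 hx e1')) (Fin.ext (hinj _ _ k2 hy e2'))
        rw [this] at hpD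
        exact Or.inr (Or.inl hpD)
      · obtain ⟨p, hp, e1, e2⟩ := hdiag'mem _ h
        obtain ⟨hpD, k1, k2, kg, _, _⟩ := hEm p hp
        have e1' : delF u p.1.val = delF u y.val := congrArg Fin.val e1
        have e2' : delF u p.2.val = delF u x.val := congrArg Fin.val e2
        have q1 : p.1.val = y.val := hinj _ _ k1 hy e1'
        have q2 : p.2.val = x.val := hinj _ _ k2 hx e2'
        omega
  -- the ear cell
  have hu1n : u - 1 < n := by omega
  have hun : u < n := by omega
  have hu2n : u + 1 < n := by omega
  set earcell : Fin n × Fin n × Fin n :=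
    ((⟨u-1, hu1n⟩ : Fin n), (⟨u, hun⟩ : Fin n), (⟨u+1, hu2n⟩ : Fin n)) with hearcell
  have he1' : e.1.val = u - 1 := by omega
  have hearmem : earcell ∈ T.cells := by
    rw [mem_cells_iff]
    refine ⟨by show u - 1 < u; omega, by show u < u + 1; omega, ?_, ?_, ?_⟩
    · exact Or.inl (Or.inl (show u = (u-1) + 1 by omega))
    · exact Or.inl (Or.inl (show u + 1 = u + 1 from rfl))
    · refine Or.inr (Or.inl ?_)
      have : ((⟨u-1, hu1n⟩ : Fin n), (⟨u+1, hu2n⟩ : Fin n)) = e :=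
        Prod.ext (Fin.ext (show u - 1 = e.1.val by omega))
          (Fin.ext (show u + 1 = e.2.val by omega))
      rw [this]
      exact he
  -- any cell containing u is the ear cell
  have hucell : ∀ t, t ∈ T.cells → (t.1.val = u ∨ t.2.1.val = u ∨ t.2.2.val = u) →
      t = earcell := by
    intro t ht hor
    rw [mem_cells_iff] at ht
    obtain ⟨o1, o2, s1, s2, s3⟩ := ht
    have n1 := hside_u _ _ s1
    have n2 := hside_u _ _ s2
    have n3 := hside_u _ _ s3
    refine Prod.ext (Fin.ext ?_) (Prod.ext (Fin.ext ?_) (Fin.ext ?_)) <;>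
      simp only [hearcell] <;> omega
  -- the quiddity at u is 1
  have hquidu : ∀ v : Fin n, v.val = u → T.quidFin v = 1 := by
    intro v hv
    unfold Triangulation.quidFin
    have hset : T.cells.filter (fun t => t.1 = v ∨ t.2.1 = v ∨ t.2.2 = v) = {earcell} := by
      ext t
      simp only [Finset.mem_filter, Finset.mem_singleton]
      constructor
      · rintro ⟨ht, hor⟩
        apply hucell t ht
        rcases hor with h | h | h
        · exact Or.inl (by rw [h, hv])
        · exact Or.inr (Or.inl (by rw [h, hv]))
        · exact Or.inr (Or.inr (by rw [h, hv]))
      · rintro rfl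
        exact ⟨hearmem, Or.inr (Or.inl (Fin.ext hv.symm))⟩
    rw [hset, Finset.card_singleton]
  -- main quiddity relation
  have hquid : ∀ v : Fin n, v.val ≠ u → ∀ w : Fin (n-1), w.val = delF u v.val →
      T.quidFin v = T'.quidFin w + (if v.val + 1 = u ∨ v.val = u + 1 then 1 else 0) := by
    intro v hv w hw
    show (T.cells.filter (fun t => t.1 = v ∨ t.2.1 = v ∨ t.2.2 = v)).card =
      T'.quidFin w + (if v.val + 1 = u ∨ v.val = u + 1 then 1 else 0)
    have hsplit := Finset.card_filter_add_card_filter_not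
      (s := T.cells.filter (fun t => t.1 = v ∨ t.2.1 = v ∨ t.2.2 = v))
      (p := fun t => t = earcell)
    have hiff : earcell ∈ T.cells.filter (fun t => t.1 = v ∨ t.2.1 = v ∨ t.2.2 = v) ↔
        (v.val + 1 = u ∨ v.val = u + 1) := by
      rw [Finset.mem_filter]
      constructor
      · rintro ⟨_, hor⟩
        rcases hor with h | h | h
        · have : u - 1 = v.val := congrArg Fin.val h
          omega
        · have : u = v.val := congrArg Fin.val h
          omega
        · have : u + 1 = v.val := congrArg Fin.val h
          omega
      · intro hc
        refine ⟨hearmem, ?_⟩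
        rcases hc with h | h
        · exact Or.inl (Fin.ext (by show u - 1 = v.val; omega))
        · exact Or.inr (Or.inr (Fin.ext (by show u + 1 = v.val; omega)))
    have h1 : ((T.cells.filter (fun t => t.1 = v ∨ t.2.1 = v ∨ t.2.2 = v)).filter
        (fun t => t = earcell)).card = if v.val + 1 = u ∨ v.val = u + 1 then 1 else 0 := by
      rw [Finset.filter_eq']
      by_cases hc : v.val + 1 = u ∨ v.val = u + 1
      · rw [if_pos (hiff.mpr hc), if_pos hc, Finset.card_singleton]
      · rw [if_neg (fun h => hc (hiff.mp h)), if_neg hc, Finset.card_empty]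
    -- characterization of the non-ear incident cells
    have hnotu : ∀ t, t ∈ (T.cells.filter (fun t => t.1 = v ∨ t.2.1 = v ∨ t.2.2 = v)).filter
        (fun t => ¬ t = earcell) →
        t ∈ T.cells ∧ (t.1 = v ∨ t.2.1 = v ∨ t.2.2 = v) ∧
        t.1.val ≠ u ∧ t.2.1.val ≠ u ∧ t.2.2.val ≠ u := by
      intro t ht
      rw [Finset.mem_filter, Finset.mem_filter] at ht
      obtain ⟨⟨htc, hinc⟩, htne⟩ := ht
      refine ⟨htc, hinc, ?_, ?_, ?_⟩ <;> intro h
      · exact htne (hucell t htc (Or.inl h))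
      · exact htne (hucell t htc (Or.inr (Or.inl h)))
      · exact htne (hucell t htc (Or.inr (Or.inr h)))
    have h2 : ((T.cells.filter (fun t => t.1 = v ∨ t.2.1 = v ∨ t.2.2 = v)).filter
        (fun t => ¬ t = earcell)).card = T'.quidFin w := by
      unfold Triangulation.quidFin
      apply Finset.card_bij (fun t _ =>
        ((f3 t.1, f3 t.2.1, f3 t.2.2) : Fin (n-1) × Fin (n-1) × Fin (n-1)))
      · intro t ht
        obtain ⟨htc, hinc, m1, m2, m3⟩ := hnotu t ht
        rw [mem_cells_iff] at htc
        obtain ⟨o1, o2, s1, s2, s3⟩ := htc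
        rw [Finset.mem_filter]
        constructor
        · rw [mem_cells_iff]
          refine ⟨(hmono _ _ m1 m2).mp o1, (hmono _ _ m2 m3).mp o2,
            (hside _ _ m1 m2 o1).mp s1, (hside _ _ m2 m3 o2).mp s2,
            (hside _ _ m1 m3 (o1.trans o2)).mp s3⟩
        · rcases hinc with h | h | h
          · exact Or.inl (Fin.ext (by
              rw [hw]
              exact congrArg (fun z : Fin n => delF u z.val) h))
          · exact Or.inr (Or.inl (Fin.ext (by
              rw [hw]
              exact congrArg (fun z : Fin n => delF u z.val) h)))
          · exact Or.inr (Or.inr (Fin.ext (by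
              rw [hw]
              exact congrArg (fun z : Fin n => delF u z.val) h)))
      · intro t1 ht1 t2 ht2 heq
        obtain ⟨_, _, m1, m2, m3⟩ := hnotu t1 ht1
        obtain ⟨_, _, k1, k2, k3⟩ := hnotu t2 ht2
        have q1 : delF u t1.1.val = delF u t2.1.val :=
          congrArg (fun z : Fin (n-1) × Fin (n-1) × Fin (n-1) => z.1.val) heq
        have q2 : delF u t1.2.1.val = delF u t2.2.1.val :=
          congrArg (fun z : Fin (n-1) × Fin (n-1) × Fin (n-1) => z.2.1.val) heq
        have q3 : delF u t1.2.2.val = delF u t2.2.2.val :=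
          congrArg (fun z : Fin (n-1) × Fin (n-1) × Fin (n-1) => z.2.2.val) heq
        exact Prod.ext (Fin.ext (hinj _ _ m1 k1 q1))
          (Prod.ext (Fin.ext (hinj _ _ m2 k2 q2)) (Fin.ext (hinj _ _ m3 k3 q3)))
      · intro s hs
        rw [Finset.mem_filter] at hs
        obtain ⟨hsc, hsinc⟩ := hs
        rw [mem_cells_iff] at hsc
        obtain ⟨o1, o2, s1, s2, s3⟩ := hsc
        have gm1 : (g s.1).val ≠ u := liftF_ne u s.1.val
        have gm2 : (g s.2.1).val ≠ u := liftF_ne u s.2.1.val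
        have gm3 : (g s.2.2).val ≠ u := liftF_ne u s.2.2.val
        have go1 : (g s.1).val < (g s.2.1).val := hliftmono _ _ o1
        have go2 : (g s.2.1).val < (g s.2.2).val := hliftmono _ _ o2
        refine ⟨(g s.1, g s.2.1, g s.2.2), ?_, ?_⟩
        · rw [Finset.mem_filter, Finset.mem_filter]
          refine ⟨⟨?_, ?_⟩, ?_⟩
          · rw [mem_cells_iff]
            refine ⟨go1, go2, ?_, ?_, ?_⟩
            · exact (hside _ _ gm1 gm2 go1).mpr (by rw [hfg, hfg]; exact s1)
            · exact (hside _ _ gm2 gm3 go2).mpr (by rw [hfg, hfg]; exact s2)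
            · exact (hside _ _ gm1 gm3 (go1.trans go2)).mpr (by rw [hfg, hfg]; exact s3)
          · -- incidence with v
            have hgv : ∀ z : Fin (n-1), z = w → g z = v := by
              intro z hz
              apply Fin.ext
              show liftF u z.val = v.val
              rw [hz, hw]
              exact lift_delF u v.val hv
            rcases hsinc with h | h | h
            · exact Or.inl (hgv _ h)
            · exact Or.inr (Or.inl (hgv _ h))
            · exact Or.inr (Or.inr (hgv _ h))
          · -- not the ear cell
            intro hEq
            have : liftF u s.2.1.val = u :=
              congrArg (fun z : Fin n × Fin n × Fin n => z.2.1.val) hEq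
            exact liftF_ne u s.2.1.val this
        · exact Prod.ext (hfg _) (Prod.ext (hfg _) (hfg _))
    omega
  -- final packaging
  refine ⟨u, T', hu1, hu2, hquidu, ?_, ?_⟩
  · intro v w hvu hwv
    have hdel : delF u v.val = v.val := by
      rcases hf3spec v.val (by omega) with ⟨a, a'⟩ | ⟨a, a'⟩ <;> omega
    have := hquid v (by omega) w (by rw [hdel]; exact hwv)
    rw [this]
    by_cases hc : v.val + 1 = u
    · rw [if_pos (Or.inl hc), if_pos hc]
    · rw [if_neg ?_, if_neg hc]
      rintro (h | h)
      · exact hc h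
      · omega
  · intro v w hvu hwv
    have hdel : delF u v.val = v.val - 1 := by
      rcases hf3spec v.val (by omega) with ⟨a, a'⟩ | ⟨a, a'⟩ <;> omega
    have := hquid v (by omega) w (by rw [hdel]; omega)
    rw [this]
    by_cases hc : v.val = u + 1
    · rw [if_pos (Or.inr hc), if_pos hc]
    · rw [if_neg ?_, if_neg hc]
      rintro (h | h)
      · omega
      · exact hc h

lemma quid_eq {n : ℕ} [NeZero n] (T : Triangulation n) (t : ℕ) (ht : t < n) :
    T.quid t = T.quidFin ⟨t, ht⟩ := by
  unfold Triangulation.quid vmap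
  congr 1
  apply Fin.ext
  show ((t : ℤ) % (n : ℤ)).toNat = t
  rw [Int.emod_eq_of_lt (by exact_mod_cast Nat.zero_le t) (by exact_mod_cast ht)]
  simp

lemma quid_per {n : ℕ} [NeZero n] (T : Triangulation n) (u : ℤ) :
    T.quid (u + n) = T.quid u := by
  unfold Triangulation.quid vmap
  congr 2
  conv_lhs => rw [show u + (n:ℤ) = u + (n:ℤ) * 1 from by ring]
  rw [Int.add_mul_emod_self_left]

lemma quid3 (T : Triangulation 3) (v : Fin 3) : T.quidFin v = 1 := by
  unfold Triangulation.quidFin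
  have hc : T.cells.filter (fun t => t.1 = v ∨ t.2.1 = v ∨ t.2.2 = v) =
      {((⟨0, by omega⟩ : Fin 3), (⟨1, by omega⟩ : Fin 3), (⟨2, by omega⟩ : Fin 3))} := by
    ext t
    rw [Finset.mem_filter, Finset.mem_singleton]
    constructor
    · rintro ⟨ht, _⟩
      rw [mem_cells_iff] at ht
      obtain ⟨o1, o2, _, _, _⟩ := ht
      have h3 : t.2.2.val < 3 := t.2.2.isLt
      exact Prod.ext (Fin.ext (show t.1.val = 0 by omega))
        (Prod.ext (Fin.ext (show t.2.1.val = 1 by omega))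
          (Fin.ext (show t.2.2.val = 2 by omega)))
    · rintro rfl
      constructor
      · rw [mem_cells_iff]
        refine ⟨show (0:ℕ) < 1 by omega, show (1:ℕ) < 2 by omega, ?_, ?_, ?_⟩
        · exact Or.inl (Or.inl (show (1:ℕ) = 0 + 1 by omega))
        · exact Or.inl (Or.inl (show (2:ℕ) = 1 + 1 by omega))
        · exact Or.inl (Or.inr (Or.inr (Or.inl ⟨rfl, rfl⟩)))
      · have hv : v.val < 3 := v.isLt
        rcases (by omega : v.val = 0 ∨ v.val = 1 ∨ v.val = 2) with h | h | h
        · exact Or.inl (Fin.ext h.symm)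
        · exact Or.inr (Or.inl (Fin.ext h.symm))
        · exact Or.inr (Or.inr (Fin.ext h.symm))
  rw [hc, Finset.card_singleton]

theorem main0 : ∀ (n : ℕ), 3 ≤ n → ∀ (_ : NeZero n) (T : Triangulation n),
    MprodZ (fun u => ((T.quid u : ℕ) : ℤ)) 0 n = -1 := by
  intro n
  induction n using Nat.strong_induction_on with
  | _ n IH =>
  intro hn inst T
  haveI := inst
  set c : ℤ → ℤ := fun u => ((T.quid u : ℕ) : ℤ) with hc
  by_cases hn3 : n = 3
  · subst hn3
    have e1 : MprodZ c 0 3 = MprodZ c 0 1 * (MprodZ c (0+1) 1 * MprodZ c (0+1+1) 1) := by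
      rw [show (3:ℕ) = 1 + (1 + 1) from rfl, MprodZ_add, MprodZ_add]
      norm_num
    rw [e1, MprodZ_one, MprodZ_one, MprodZ_one]
    have v0 : c 0 = 1 := by
      show ((T.quid ((0:ℕ):ℤ) : ℕ) : ℤ) = 1
      rw [quid_eq T 0 (by omega), quid3]
      norm_num
    have v1 : c (0+1) = 1 := by
      show ((T.quid _ : ℕ) : ℤ) = 1
      rw [show (0+1 : ℤ) = ((1:ℕ):ℤ) by norm_num, quid_eq T 1 (by omega), quid3]
      norm_num
    have v2 : c (0+1+1) = 1 := by
      show ((T.quid _ : ℕ) : ℤ) = 1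
      rw [show (0+1+1 : ℤ) = ((2:ℕ):ℤ) by norm_num, quid_eq T 2 (by omega), quid3]
      norm_num
    rw [v0, v1, v2, ← mul_assoc]
    exact Mmat_one_cube
  · -- inductive step
    have hn4 : 4 ≤ n := by omega
    obtain ⟨u, T', hu1, hu2, hq1, hqlt, hqgt⟩ := ear_removal n hn4 T
    haveI inst' : NeZero (n-1) := ⟨by omega⟩
    have IH' := IH (n-1) (by omega) (by omega) inst' T'
    set c' : ℤ → ℤ := fun t => ((T'.quid t : ℕ) : ℤ) with hc'
    set a := u - 1 with ha
    set r := n - u - 2 with hr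
    have hu : u = a + 1 := by omega
    have hnar : n = a + (3 + r) := by omega
    have hnar' : n - 1 = a + (2 + r) := by omega
    -- pure ℕ versions of the quiddity relations
    have Hq1 : ∀ h2 : u < n, T.quidFin ⟨u, h2⟩ = 1 := fun h2 => hq1 ⟨u, h2⟩ rfl
    have Hlt : ∀ (t : ℕ) (h1 : t < u) (h2 : t < n) (h3 : t < n - 1),
        T.quidFin ⟨t, h2⟩ = T'.quidFin ⟨t, h3⟩ + (if t + 1 = u then 1 else 0) :=
      fun t h1 h2 h3 => hqlt ⟨t, h2⟩ ⟨t, h3⟩ h1 rfl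
    have Hgt : ∀ (s t : ℕ) (h1 : u < t) (hst : s + 1 = t) (h2 : t < n) (h3 : s < n - 1),
        T.quidFin ⟨t, h2⟩ = T'.quidFin ⟨s, h3⟩ + (if t = u + 1 then 1 else 0) :=
      fun s t h1 hst h2 h3 => hqgt ⟨t, h2⟩ ⟨s, h3⟩ h1 hst
    -- value lemmas
    have hva : ∀ (t : ℕ) (ht : t < n), c (t : ℤ) = (T.quidFin ⟨t, ht⟩ : ℤ) := by
      intro t ht
      show ((T.quid (t:ℤ) : ℕ) : ℤ) = _
      rw [quid_eq T t ht]
    have hva' : ∀ (t : ℕ) (ht : t < n - 1), c' (t : ℤ) = (T'.quidFin ⟨t, ht⟩ : ℤ) := by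
      intro t ht
      show ((T'.quid (t:ℤ) : ℕ) : ℤ) = _
      rw [quid_eq T' t ht]
    -- head
    have hhead : MprodZ c 0 a = MprodZ c' 0 a := by
      apply MprodZ_congr
      intro t htl
      show c (0 + (t:ℤ)) = c' (0 + (t:ℤ))
      rw [show (0:ℤ) + (t:ℤ) = ((t:ℕ):ℤ) from by push_cast; ring]
      rw [hva t (by omega), hva' t (by omega), Hlt t (by omega) (by omega) (by omega),
        if_neg (show ¬ (t + 1 = u) by omega)]
      push_cast
      ring
    -- tail
    have htail : MprodZ c ((0:ℤ) + a + 3) r = MprodZ c' ((0:ℤ) + a + 2) r := by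
      apply MprodZ_congr
      intro t htl
      show c ((0:ℤ) + a + 3 + t) = c' ((0:ℤ) + a + 2 + t)
      rw [show (0:ℤ) + a + 3 + t = ((a + 3 + t : ℕ) : ℤ) from by push_cast; ring]
      rw [show (0:ℤ) + a + 2 + t = ((a + 2 + t : ℕ) : ℤ) from by push_cast; ring]
      rw [hva _ (by omega), hva' _ (by omega),
        Hgt (a+2+t) (a+3+t) (by omega) (by omega) (by omega) (by omega),
        if_neg (show ¬ (a+3+t = u + 1) by omega)]
      push_cast
      ring
    -- middle values
    have hvamid : c ((0:ℤ) + a) = c' ((0:ℤ) + a) + 1 := by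
      rw [show (0:ℤ) + a = ((a:ℕ):ℤ) from by push_cast; ring]
      rw [hva a (by omega), hva' a (by omega), Hlt a (by omega) (by omega) (by omega),
        if_pos (show a + 1 = u by omega)]
      push_cast
      ring
    have hvu1 : c ((0:ℤ) + a + 1) = 1 := by
      rw [show (0:ℤ) + a + 1 = ((a + 1 : ℕ):ℤ) from by push_cast; ring]
      rw [hva (a+1) (by omega)]
      rw [show (⟨a+1, by omega⟩ : Fin n) = ⟨u, by omega⟩ from Fin.ext (show a+1 = u by omega),
        Hq1]
      norm_num
    have hvamid2 : c ((0:ℤ) + a + 1 + 1) = c' ((0:ℤ) + a + 1) + 1 := by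
      rw [show (0:ℤ) + a + 1 + 1 = ((a + 2 : ℕ):ℤ) from by push_cast; ring]
      rw [show (0:ℤ) + a + 1 = ((a + 1 : ℕ):ℤ) from by push_cast; ring]
      rw [hva (a+2) (by omega), hva' (a+1) (by omega),
        Hgt (a+1) (a+2) (by omega) (by omega) (by omega) (by omega),
        if_pos (show a + 2 = u + 1 by omega)]
      push_cast
      ring
    -- decompose the two products
    have hdecomp : MprodZ c 0 n =
        MprodZ c 0 a * (Mmat (c ((0:ℤ)+a)) * Mmat (c ((0:ℤ)+a+1)) * Mmat (c ((0:ℤ)+a+1+1))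
          * MprodZ c ((0:ℤ)+a+3) r) := by
      rw [hnar, MprodZ_add]
      congr 1
      rw [show 3 + r = 1 + (1 + (1 + r)) by ring, MprodZ_add, MprodZ_add, MprodZ_add,
        MprodZ_one, MprodZ_one, MprodZ_one, Nat.cast_one]
      rw [show (0:ℤ) + (a:ℕ) + 1 + 1 + 1 = (0:ℤ) + (a:ℕ) + 3 by ring]
      noncomm_ring
    have hdecomp' : MprodZ c' 0 (n-1) =
        MprodZ c' 0 a * (Mmat (c' ((0:ℤ)+a)) * Mmat (c' ((0:ℤ)+a+1))
          * MprodZ c' ((0:ℤ)+a+2) r) := by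
      rw [hnar', MprodZ_add]
      congr 1
      rw [show 2 + r = 1 + (1 + r) by ring, MprodZ_add, MprodZ_add,
        MprodZ_one, MprodZ_one, Nat.cast_one]
      rw [show (0:ℤ) + (a:ℕ) + 1 + 1 = (0:ℤ) + (a:ℕ) + 2 by ring]
      noncomm_ring
    rw [hdecomp, hhead, htail, hvamid, hvu1, hvamid2, Mmat_splice]
    rw [show c' ((0:ℤ)+a) + 1 - 1 = c' ((0:ℤ)+a) by ring,
      show c' ((0:ℤ)+a+1) + 1 - 1 = c' ((0:ℤ)+a+1) by ring]
    rw [hdecomp'] at IH'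
    exact IH'


/-- For the quiddity `(c_u)` of a triangulation of a convex `n`-gon, the product
`M(c_i, c_{i+1}, …, c_{i+n-1})` is `-I`. -/
theorem Mprod_quiddity_period (n : ℕ) (hn : 3 ≤ n) [NeZero n] (T : Triangulation n)
    (i : ℤ) :
    MprodZ (fun u => (T.quid u : ℤ)) i n = -(1 : Matrix (Fin 2) (Fin 2) ℤ) := by
  apply MprodZ_all (fun u => ((T.quid u : ℕ) : ℤ)) n
  · intro u
    show ((T.quid (u + n) : ℕ) : ℤ) = ((T.quid u : ℕ) : ℤ)
    rw [quid_per]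
  · exact main0 n hn ‹NeZero n› T

end CCFPaper
end

section
/- For integers a, b ≥ 2 and the q-deformed matrices M_q(a) = [[[a]_q, −q^{a−1}],[1, 0]] (where [a]_q = 1 + q + … + q^{a−1}), one has the identity M_q(a)·M_q(1)·M_q(b) = q·M_q(a−1)·M_q(b−1) as matrices over ℤ[q]. -/
open Polynomial

open scoped Classical

namespace CCFPaper

lemma qInt_succ' (n : ℕ) : qInt (n + 1) = qInt n + X ^ n := by
  simp [qInt, Finset.sum_range_succ]

lemma X_mul_qInt' (n : ℕ) : X * qInt n = qInt (n + 1) - 1 := by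
  simp only [qInt, Finset.mul_sum, Finset.sum_range_succ']
  simp [← pow_succ']

/-- For `a, b ≥ 2`, one has `M_q(a) M_q(1) M_q(b) = q · M_q(a-1) M_q(b-1)`. -/
theorem Mq_one_middle (a b : ℕ) (ha : 2 ≤ a) (hb : 2 ≤ b) :
    Mq a * Mq 1 * Mq b = (X : Polynomial ℤ) • (Mq (a - 1) * Mq (b - 1)) := by
  obtain ⟨a, rfl⟩ : ∃ a', a = a' + 2 := ⟨a - 2, by omega⟩
  obtain ⟨b, rfl⟩ : ∃ b', b = b' + 2 := ⟨b - 2, by omega⟩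
  have ha1 : qInt (a+2) = qInt (a+1) + X ^ (a+1) := qInt_succ' (a + 1)
  have hxb : X * qInt (b+1) = qInt (b+2) - 1 := X_mul_qInt' (b + 1)
  have h1 : qInt 1 = 1 := by simp [qInt]
  simp only [Mq, Nat.add_sub_cancel]
  rw [show (1:ℕ) - 1 = 0 from rfl, pow_zero]
  refine Matrix.ext fun i j => ?_
  fin_cases i <;> fin_cases j <;>
    simp [Matrix.mul_apply, Fin.sum_univ_two, h1, Nat.add_sub_cancel]
  · linear_combination (qInt (b+2) - (1:Polynomial ℤ)) * ha1 - qInt (a+1) * hxb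
  · linear_combination (X:Polynomial ℤ)^(b+1) * ha1
  · linear_combination -hxb
  · ring

end CCFPaper
end
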